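/- Let V : ℝ → ℝ be twice differentiable, let w := e^{−V}, and suppose that ∫_ℝ |y|^j w(y) dy < ∞ for every integer j ≥ 0, that |V'(y)| ≤ C₁(1 + |y|) for all y ∈ ℝ, and that V''(y) ≥ C₂ for all y ∈ ℝ, where C₁, C₂ > 0. Then there exists a constant C' > 0 depending only on C₁ and C₂ such that for every integer k ≥ 1 and every real polynomial p of degree at most k, ∫_ℝ y² p(y)² w(y) dy ≤ (C')² k ∫_ℝ p(y)² w(y) dy; that is, ‖y·p‖_{L²(w)} ≤ C' √k ‖p‖_{L²(w)}. -/

import Mathlib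

open MeasureTheory Real Filter Finset

lemma pow_le_exp_mul_factorial (k : ℕ) : (k:ℝ)^k ≤ Real.exp k * k.factorial := by
  induction k with
  | zero => simp
  | succ n ih =>
    rcases Nat.eq_zero_or_pos n with rfl | hn
    · simpa using Real.one_le_exp (by norm_num)
    have hn' : (0:ℝ) < n := by exact_mod_cast hn
    have h1 : ((n:ℝ)+1)^n ≤ Real.exp 1 * (n:ℝ)^n := by
      have e1 : ((n:ℝ)+1)^n = (n:ℝ)^n * (1 + 1/n)^n := by
        rw [← mul_pow]
        congr 1
        field_simp
      rw [e1]
      have h2 : (1 + 1/(n:ℝ))^n ≤ (Real.exp (1/n))^n := by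
        apply pow_le_pow_left₀ (by positivity)
        rw [add_comm]
        exact Real.add_one_le_exp _
      rw [← Real.exp_nat_mul] at h2
      have e2 : (n:ℝ) * (1/n) = 1 := by field_simp
      rw [e2] at h2
      nlinarith [pow_nonneg (le_of_lt hn') n, Real.exp_pos 1]
    have hfact : (Nat.factorial (n+1) : ℝ) = ((n:ℝ)+1) * n.factorial := by
      push_cast [Nat.factorial_succ]; ring
    have : ((n:ℝ)+1)^(n+1) ≤ Real.exp (n+1) * (Nat.factorial (n+1)) := by
      calc ((n:ℝ)+1)^(n+1) = ((n:ℝ)+1) * ((n:ℝ)+1)^n := by ring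
      _ ≤ ((n:ℝ)+1) * (Real.exp 1 * (n:ℝ)^n) :=
          mul_le_mul_of_nonneg_left h1 (by positivity)
      _ ≤ ((n:ℝ)+1) * (Real.exp 1 * (Real.exp n * n.factorial)) := by
          have h3 : Real.exp 1 * (n:ℝ)^n ≤ Real.exp 1 * (Real.exp n * n.factorial) :=
            mul_le_mul_of_nonneg_left ih (Real.exp_pos 1).le
          exact mul_le_mul_of_nonneg_left h3 (by positivity)
      _ = Real.exp ((n:ℝ)+1) * (((n:ℝ)+1) * n.factorial) := by rw [Real.exp_add]; ring
      _ = Real.exp ((n:ℝ)+1) * (Nat.factorial (n+1)) := by rw [hfact]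
    push_cast
    convert this using 2

lemma exists_node {f : ℝ → ℝ} (hf : Continuous f) {c d : ℝ} (h : c < d) :
    ∃ x ∈ Set.Icc c d, (d - c) * f x ≤ ∫ t in Set.Icc c d, f t := by
  obtain ⟨x, hx, hmin⟩ := (isCompact_Icc (a := c) (b := d)).exists_isMinOn
    (Set.nonempty_Icc.2 h.le) hf.continuousOn
  refine ⟨x, hx, ?_⟩
  have h1 : ∫ _t in Set.Icc c d, f x ≤ ∫ t in Set.Icc c d, f t := by
    apply setIntegral_mono_on
    · exact integrableOn_const (by simp [Real.volume_Icc])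
    · exact hf.integrableOn_Icc
    · exact measurableSet_Icc
    · exact fun t ht => hmin ht
  have h2 : ∫ _t in Set.Icc c d, (f x : ℝ) = (d - c) * f x := by
    rw [setIntegral_const, measureReal_def, Real.volume_Icc, smul_eq_mul,
      ENNReal.toReal_ofReal (by linarith : (0:ℝ) ≤ d - c)]
  linarith

lemma prod_range_sub_self (i : ℕ) : ∏ j ∈ Finset.range i, (i - j) = i.factorial := by
  rw [← Nat.descFactorial_self]
  exact (Nat.descFactorial_eq_prod_range i i).symm

lemma prod_range_add_one (n : ℕ) : ∏ j ∈ Finset.range n, (j + 1) = n.factorial := by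
  induction n with
  | zero => simp
  | succ m ih => rw [Finset.prod_range_succ, ih, Nat.factorial_succ, mul_comm]

lemma erase_range_split (k i : ℕ) (hik : i ≤ k) :
    (Finset.range (k+1)).erase i = Finset.range i ∪ Finset.Ico (i+1) (k+1) := by
  ext j
  simp only [Finset.mem_erase, Finset.mem_range, Finset.mem_union, Finset.mem_Ico]
  omega

lemma prod_erase_abs (k i : ℕ) (hik : i ≤ k) :
    ∏ j ∈ (Finset.range (k+1)).erase i, |(i:ℝ) - (j:ℝ)|
      = (i.factorial : ℝ) * ((k-i).factorial : ℝ) := by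
  rw [erase_range_split k i hik, Finset.prod_union]
  · have h1 : ∏ j ∈ Finset.range i, |(i:ℝ) - (j:ℝ)| = (i.factorial : ℝ) := by
      rw [← prod_range_sub_self i]
      push_cast
      apply Finset.prod_congr rfl
      intro j hj
      rw [Finset.mem_range] at hj
      have hji : (j:ℝ) < (i:ℝ) := by exact_mod_cast hj
      rw [abs_of_nonneg (by linarith)]
      rw [Nat.cast_sub hj.le]
    have h2 : ∏ j ∈ Finset.Ico (i+1) (k+1), |(i:ℝ) - (j:ℝ)| = ((k-i).factorial : ℝ) := by
      rw [← prod_range_add_one (k-i)]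
      rw [Finset.prod_Ico_eq_prod_range]
      have hc : k + 1 - (i+1) = k - i := by omega
      rw [hc]
      push_cast
      apply Finset.prod_congr rfl
      intro m _
      rw [abs_sub_comm, abs_of_nonneg (by push_cast; linarith)]
      push_cast; ring
    rw [h1, h2]
  · simp only [Finset.disjoint_left, Finset.mem_range, Finset.mem_Ico]
    omega

lemma factorial_prod_lower (k i : ℕ) (hik : i ≤ k) :
    (k.factorial : ℝ) / 2^k ≤ (i.factorial : ℝ) * ((k-i).factorial : ℝ) := by
  have hc : k.choose i ≤ 2^k := by
    rw [← Nat.sum_range_choose k]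
    exact Finset.single_le_sum (fun _ _ => Nat.zero_le _) (Finset.mem_range.2 (by omega))
  have he : k.choose i * (i.factorial * (k-i).factorial) = k.factorial := by
    rw [← mul_assoc]; exact Nat.choose_mul_factorial_mul_factorial hik
  have he' : (k.factorial : ℝ) = (k.choose i : ℝ) * ((i.factorial : ℝ) * ((k-i).factorial : ℝ)) := by
    exact_mod_cast he.symm
  rw [div_le_iff₀ (by positivity), he']
  have h1 : (k.choose i : ℝ) ≤ 2^k := by exact_mod_cast hc
  have h2 : (0:ℝ) < (i.factorial : ℝ) * ((k-i).factorial : ℝ) := by positivity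
  nlinarith

lemma poly_growth {k : ℕ} (hk : 1 ≤ k) {a : ℝ} (ha : 0 < a) (p : Polynomial ℝ)
    (hp : p.natDegree ≤ k) {y : ℝ} (hy : a ≤ |y|) :
    p.eval y ^ 2 ≤ ((k:ℝ)+1)^3 / a * (8 * Real.exp 1 * |y| / a)^(2*k)
      * ∫ x in Set.Icc (-a) a, p.eval x ^ 2 := by
  have hk1 : (0:ℝ) < (k:ℝ)+1 := by positivity
  have hkR : (1:ℝ) ≤ (k:ℝ) := by exact_mod_cast hk
  set L : ℝ := 2*a/((k:ℝ)+1) with hL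
  have hLpos : 0 < L := by positivity
  set Q : ℝ := ∫ x in Set.Icc (-a) a, p.eval x ^ 2 with hQ
  have hQnn : 0 ≤ Q := setIntegral_nonneg measurableSet_Icc (fun x _ => sq_nonneg _)
  have hcont : Continuous fun t : ℝ => p.eval t ^ 2 := p.continuous.pow 2
  have hnode : ∀ i : ℕ, ∃ x, x ∈ Set.Icc (-a + i*L + L/4) (-a + i*L + 3*L/4) ∧
      (L/2) * p.eval x ^ 2 ≤
        ∫ t in Set.Icc (-a + i*L + L/4) (-a + i*L + 3*L/4), p.eval t ^ 2 := by
    intro i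
    have h : (-a + i*L + L/4) < (-a + i*L + 3*L/4) := by linarith
    obtain ⟨x, hx, hle⟩ := exists_node hcont h
    have he : (-a + i*L + 3*L/4) - (-a + i*L + L/4) = L/2 := by ring
    rw [he] at hle
    exact ⟨x, hx, hle⟩
  choose v hv1 hv2 using hnode
  have hsub : ∀ i : ℕ, i ≤ k →
      Set.Icc (-a + i*L + L/4) (-a + i*L + 3*L/4) ⊆ Set.Icc (-a) a := by
    intro i hik
    apply Set.Icc_subset_Icc
    · have h0 : (0:ℝ) ≤ i*L + L/4 := by positivity
      linarith
    · have hi : (i:ℝ) ≤ k := by exact_mod_cast hik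
      have h2a : ((k:ℝ)+1) * L = 2*a := by rw [hL]; field_simp
      nlinarith
  have hval : ∀ i : ℕ, i ≤ k → p.eval (v i) ^ 2 ≤ ((k:ℝ)+1) / a * Q := by
    intro i hik
    have h1 : (L/2) * p.eval (v i) ^ 2 ≤ Q := by
      refine (hv2 i).trans ?_
      refine setIntegral_mono_set hcont.integrableOn_Icc
        (Eventually.of_forall fun x => sq_nonneg _)
        (HasSubset.Subset.eventuallyLE (hsub i hik))
    have hL2 : L/2 = a/((k:ℝ)+1) := by rw [hL]; ring
    rw [hL2] at h1
    rw [div_mul_eq_mul_div, le_div_iff₀ ha]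
    calc p.eval (v i) ^ 2 * a = (a/((k:ℝ)+1) * p.eval (v i) ^ 2) * ((k:ℝ)+1) := by
          field_simp
    _ ≤ Q * ((k:ℝ)+1) := mul_le_mul_of_nonneg_right h1 hk1.le
    _ = ((k:ℝ)+1) * Q := by ring
  have hvmem : ∀ i : ℕ, i ≤ k → |v i| ≤ a := by
    intro i hik
    have := hsub i hik (hv1 i)
    rw [Set.mem_Icc] at this
    exact abs_le.2 this
  have hsep : ∀ i j : ℕ, i < j → ((j:ℝ) - i) * (L/2) ≤ v j - v i := by
    intro i j hij
    have h1 := (hv1 i).2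
    have h2 := (hv1 j).1
    have hji : (1:ℝ) ≤ (j:ℝ) - i := by
      have : (i:ℝ)+1 ≤ j := by exact_mod_cast hij
      linarith
    nlinarith [mul_nonneg (by linarith : (0:ℝ) ≤ (j:ℝ) - i - 1) hLpos.le]
  have hsepabs : ∀ i j : ℕ, i ≠ j → |(i:ℝ) - j| * (L/2) ≤ |v i - v j| := by
    intro i j hij
    rcases Nat.lt_or_ge i j with h | h
    · have := hsep i j h
      have hij' : (i:ℝ) < j := by exact_mod_cast h
      rw [abs_sub_comm ((i:ℝ)) j, abs_of_nonneg (by linarith), abs_sub_comm (v i) (v j)]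
      exact this.trans (le_abs_self _)
    · have hji : j < i := lt_of_le_of_ne h (Ne.symm hij)
      have := hsep j i hji
      have hij' : (j:ℝ) < i := by exact_mod_cast hji
      rw [abs_of_nonneg (by linarith)]
      exact this.trans (le_abs_self _)
  have hinj : Set.InjOn v (Finset.range (k+1) : Set ℕ) := by
    intro i _ j _ hij
    by_contra hne
    have h1 := hsepabs i j hne
    rw [hij, sub_self, abs_zero] at h1
    have hpos : 0 < |(i:ℝ) - j| := abs_pos.2 (sub_ne_zero.2 (by exact_mod_cast hne))
    nlinarith
  have hdeg : p.degree < ((Finset.range (k+1)).card : WithBot ℕ) := by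
    rw [Finset.card_range]
    apply lt_of_le_of_lt Polynomial.degree_le_natDegree
    exact_mod_cast Nat.lt_succ_of_le hp
  have hinterp := Lagrange.eq_interpolate hinj hdeg
  have heval : p.eval y = ∑ i ∈ Finset.range (k+1),
      p.eval (v i) * (Lagrange.basis (Finset.range (k+1)) v i).eval y := by
    conv_lhs => rw [hinterp]
    rw [Lagrange.interpolate_apply, Polynomial.eval_finset_sum]
    apply Finset.sum_congr rfl
    intro i _
    rw [Polynomial.eval_mul, Polynomial.eval_C]
  set B : ℝ := (8 * Real.exp 1 * |y| / a)^k with hB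
  have hBnn : 0 ≤ B := by positivity
  have hbasis : ∀ i ∈ Finset.range (k+1),
      |(Lagrange.basis (Finset.range (k+1)) v i).eval y| ≤ B := by
    intro i hi
    rw [Finset.mem_range] at hi
    have hik : i ≤ k := Nat.lt_succ_iff.1 hi
    rw [Lagrange.basis, Polynomial.eval_prod, Finset.abs_prod]
    have hfac : ∀ j ∈ (Finset.range (k+1)).erase i,
        |(Lagrange.basisDivisor (v i) (v j)).eval y| ≤ (4*|y|/L) * |(i:ℝ) - j|⁻¹ := by
      intro j hj
      rw [Finset.mem_erase, Finset.mem_range] at hj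
      obtain ⟨hji, hjk⟩ := hj
      have hjk' : j ≤ k := Nat.lt_succ_iff.1 hjk
      have hijne : i ≠ j := fun h => hji h.symm
      have habs : 0 < |(i:ℝ) - j| := abs_pos.2 (sub_ne_zero.2 (by exact_mod_cast hijne))
      have hsepij := hsepabs i j hijne
      have hvij : 0 < |v i - v j| := lt_of_lt_of_le (by positivity) hsepij
      have heval2 : (Lagrange.basisDivisor (v i) (v j)).eval y = (v i - v j)⁻¹ * (y - v j) := by
        simp [Lagrange.basisDivisor]
      rw [heval2, abs_mul, abs_inv]
      have h1 : |y - v j| ≤ 2 * |y| := by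
        have := hvmem j hjk'
        have h2 := abs_sub_abs_le_abs_sub y (v j)
        have := abs_sub (y) (v j)
        calc |y - v j| ≤ |y| + |v j| := abs_sub _ _
        _ ≤ 2 * |y| := by linarith [hvmem j hjk']
      have h2 : |v i - v j|⁻¹ ≤ (|(i:ℝ) - j| * (L/2))⁻¹ := by
        apply inv_anti₀ (by positivity) hsepij
      calc |v i - v j|⁻¹ * |y - v j| ≤ (|(i:ℝ) - j| * (L/2))⁻¹ * (2*|y|) := by
            apply mul_le_mul h2 h1 (abs_nonneg _) (by positivity)
      _ = (4*|y|/L) * |(i:ℝ) - j|⁻¹ := by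
            rw [mul_inv]
            field_simp
            ring
    have hprodle : ∏ j ∈ (Finset.range (k+1)).erase i,
        |(Lagrange.basisDivisor (v i) (v j)).eval y|
        ≤ ∏ j ∈ (Finset.range (k+1)).erase i, ((4*|y|/L) * |(i:ℝ) - j|⁻¹) :=
      Finset.prod_le_prod (fun j _ => abs_nonneg _) hfac
    refine hprodle.trans ?_
    rw [Finset.prod_mul_distrib, Finset.prod_const,
      Finset.card_erase_of_mem (Finset.mem_range.2 hi), Finset.card_range,
      Finset.prod_inv_distrib, prod_erase_abs k i hik]
    have hstep : (4*|y|/L)^(k+1-1) * ((i.factorial : ℝ) * ((k-i).factorial : ℝ))⁻¹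
        ≤ (4*|y|/L)^k * (2^k / (k.factorial : ℝ)) := by
      have hc : k+1-1 = k := rfl
      rw [hc]
      apply mul_le_mul_of_nonneg_left _ (by positivity)
      have hfl := factorial_prod_lower k i hik
      have h0 : (0:ℝ) < (k.factorial:ℝ)/2^k := by positivity
      have h1 := inv_anti₀ h0 hfl
      rwa [inv_div] at h1
    refine hstep.trans ?_
    -- (4|y|/L)^k * 2^k / k! ≤ (8 e |y| / a)^k
    have hkpos : (0:ℝ) < (k:ℝ) := by linarith
    have hkf : (0:ℝ) < (k.factorial : ℝ) := by positivity
    have hfe : (2:ℝ)^k / (k.factorial : ℝ) ≤ (2 * Real.exp 1 / (k:ℝ))^k := by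
      have h1 := pow_le_exp_mul_factorial k
      have h2 : (2 * Real.exp 1 / (k:ℝ))^k = 2^k * Real.exp k / (k:ℝ)^k := by
        rw [div_pow, mul_pow, Real.exp_one_pow]
      rw [h2, div_le_div_iff₀ hkf (by positivity)]
      have h3 : (2:ℝ)^k * (k:ℝ)^k ≤ 2^k * (Real.exp k * k.factorial) :=
        mul_le_mul_of_nonneg_left h1 (by positivity)
      nlinarith
    have hLk : a ≤ L * (k:ℝ) := by
      rw [hL, div_mul_eq_mul_div, le_div_iff₀ hk1]
      nlinarith
    calc (4*|y|/L)^k * (2^k / (k.factorial : ℝ))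
        ≤ (4*|y|/L)^k * (2 * Real.exp 1 / (k:ℝ))^k :=
          mul_le_mul_of_nonneg_left hfe (by positivity)
    _ = (8 * Real.exp 1 * |y| / (L * (k:ℝ)))^k := by
        rw [← mul_pow]
        congr 1
        field_simp
        ring
    _ ≤ B := by
        rw [hB]
        apply pow_le_pow_left₀ (by positivity)
        apply div_le_div_of_nonneg_left (by positivity) ha hLk
  -- final assembly
  have hsum : |p.eval y| ≤ ∑ i ∈ Finset.range (k+1), |p.eval (v i)| * B := by
    rw [heval]
    refine (Finset.abs_sum_le_sum_abs _ _).trans ?_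
    apply Finset.sum_le_sum
    intro i hi
    rw [abs_mul]
    exact mul_le_mul_of_nonneg_left (hbasis i hi) (abs_nonneg _)
  have hsq : p.eval y ^ 2 ≤ ((k:ℝ)+1) * ∑ i ∈ Finset.range (k+1), (|p.eval (v i)| * B)^2 := by
    have h1 : p.eval y ^2 = |p.eval y|^2 := (sq_abs _).symm
    rw [h1]
    have h2 : |p.eval y|^2 ≤ (∑ i ∈ Finset.range (k+1), |p.eval (v i)| * B)^2 :=
      pow_le_pow_left₀ (abs_nonneg _) hsum 2
    refine h2.trans ?_
    have h3 := sq_sum_le_card_mul_sum_sq (s := Finset.range (k+1))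
      (f := fun i => |p.eval (v i)| * B)
    simpa [Finset.card_range] using h3
  have hterm : ∀ i ∈ Finset.range (k+1), (|p.eval (v i)| * B)^2 ≤ ((k:ℝ)+1)/a * Q * B^2 := by
    intro i hi
    rw [mul_pow, sq_abs]
    exact mul_le_mul_of_nonneg_right
      (hval i (Nat.lt_succ_iff.1 (Finset.mem_range.1 hi))) (by positivity)
  have hsum2 : ∑ i ∈ Finset.range (k+1), (|p.eval (v i)| * B)^2
      ≤ ((k:ℝ)+1) * (((k:ℝ)+1)/a * Q * B^2) := by
    refine (Finset.sum_le_sum hterm).trans ?_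
    rw [Finset.sum_const, Finset.card_range, nsmul_eq_mul]
    exact le_of_eq (by push_cast; ring)
  have hB2 : B^2 = (8 * Real.exp 1 * |y| / a)^(2*k) := by
    rw [hB, ← pow_mul, mul_comm k 2]
  calc p.eval y ^ 2 ≤ ((k:ℝ)+1) * ∑ i ∈ Finset.range (k+1), (|p.eval (v i)| * B)^2 := hsq
  _ ≤ ((k:ℝ)+1) * (((k:ℝ)+1) * (((k:ℝ)+1)/a * Q * B^2)) :=
      mul_le_mul_of_nonneg_left hsum2 (by positivity)
  _ = ((k:ℝ)+1)^3 / a * B^2 * Q := by field_simp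
  _ = ((k:ℝ)+1)^3 / a * (8 * Real.exp 1 * |y| / a)^(2*k) * Q := by rw [hB2]

section Vbounds
variable {V : ℝ → ℝ} {C₁ C₂ : ℝ}

lemma V_lower (hV : Differentiable ℝ V) (hV' : Differentiable ℝ (deriv V))
    (hV'' : ∀ y, C₂ ≤ deriv (deriv V) y) :
    ∀ y : ℝ, V 0 + deriv V 0 * y + C₂/2 * y^2 ≤ V y := by
  intro y
  set g : ℝ → ℝ := fun t => V t - deriv V 0 * t - C₂/2 * t^2 with hg
  have hgd : ∀ t, HasDerivAt g (deriv V t - deriv V 0 - C₂ * t) t := by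
    intro t
    have h1 : HasDerivAt (fun t : ℝ => deriv V 0 * t) (deriv V 0) t := by
      simpa using (hasDerivAt_id t).const_mul (deriv V 0)
    have h2 : HasDerivAt (fun t : ℝ => C₂/2 * t^2) (C₂ * t) t := by
      have := (hasDerivAt_pow 2 t).const_mul (C₂/2)
      simpa [mul_comm, mul_assoc] using this.congr_deriv (by push_cast; ring)
    exact ((hV t).hasDerivAt.sub h1).sub h2
  have hgdiff : Differentiable ℝ g := fun t => (hgd t).differentiableAt
  have hgderiv : ∀ t, deriv g t = deriv V t - deriv V 0 - C₂ * t :=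
    fun t => (hgd t).deriv
  -- h := deriv V - C₂ * id is monotone
  have hhd : ∀ t, HasDerivAt (fun t => deriv V t - C₂ * t) (deriv (deriv V) t - C₂) t := by
    intro t
    exact (hV' t).hasDerivAt.sub (by simpa using (hasDerivAt_id t).const_mul C₂)
  have hmono : Monotone (fun t => deriv V t - C₂ * t) := by
    apply monotone_of_deriv_nonneg
    · exact fun t => (hhd t).differentiableAt
    · intro t
      rw [(hhd t).deriv]
      linarith [hV'' t]
  have hsign : ∀ t : ℝ, 0 ≤ t → 0 ≤ deriv g t := by
    intro t ht
    have := hmono ht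
    simp only [mul_zero, sub_zero] at this
    rw [hgderiv t]; linarith
  have hsign' : ∀ t : ℝ, t ≤ 0 → deriv g t ≤ 0 := by
    intro t ht
    have := hmono ht
    simp only [mul_zero, sub_zero] at this
    rw [hgderiv t]; linarith
  have key : g 0 ≤ g y := by
    rcases le_or_gt 0 y with h | h
    · have := monotoneOn_of_deriv_nonneg (convex_Ici 0) hgdiff.continuous.continuousOn
        (fun t _ => (hgdiff t).differentiableWithinAt)
        (fun t ht => hsign t (le_of_lt (by simpa using ht)))
        (Set.self_mem_Ici) (Set.mem_Ici.2 h) h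
      exact this
    · have := antitoneOn_of_deriv_nonpos (convex_Iic 0) hgdiff.continuous.continuousOn
        (fun t _ => (hgdiff t).differentiableWithinAt)
        (fun t ht => hsign' t (le_of_lt (by simpa using ht)))
        (Set.mem_Iic.2 h.le) (Set.self_mem_Iic) h.le
      exact this
  have hg0 : g 0 = V 0 := by simp [hg]
  have hgy : g y = V y - deriv V 0 * y - C₂/2 * y^2 := rfl
  rw [hg0, hgy] at key
  linarith

lemma V_upper (hV : Differentiable ℝ V)
    (hV'b : ∀ y, |deriv V y| ≤ C₁ * (1 + |y|)) (hC₁ : 0 < C₁) :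
    ∀ y : ℝ, V y ≤ V 0 + C₁ * (|y| + y^2) := by
  intro y
  have hb : ∀ x ∈ Set.Icc (-|y|) (|y|), ‖deriv V x‖ ≤ C₁ * (1 + |y|) := by
    intro x hx
    rw [Set.mem_Icc] at hx
    have : |x| ≤ |y| := abs_le.2 hx
    calc ‖deriv V x‖ = |deriv V x| := rfl
    _ ≤ C₁ * (1 + |x|) := hV'b x
    _ ≤ C₁ * (1 + |y|) := by nlinarith [abs_nonneg x]
  have hmem0 : (0:ℝ) ∈ Set.Icc (-|y|) (|y|) := by
    constructor <;> simp [abs_nonneg y, neg_nonpos.2 (abs_nonneg y)]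
  have hmemy : y ∈ Set.Icc (-|y|) (|y|) := by
    constructor
    · linarith [neg_abs_le y]
    · exact le_abs_self y
  have := (convex_Icc (-|y|) (|y|)).norm_image_sub_le_of_norm_deriv_le
    (fun x _ => hV x) hb hmem0 hmemy
  have h2 : |V y - V 0| ≤ C₁ * (1 + |y|) * |y| := by
    simpa [Real.norm_eq_abs] using this
  have h3 := (abs_le.1 h2).2
  nlinarith [sq_abs y]

end Vbounds

lemma integrable_poly_mul_w {w : ℝ → ℝ} (hwc : Continuous w) (hwnn : ∀ y, 0 ≤ w y)
    (hmom : ∀ j : ℕ, Integrable (fun y => |y| ^ j * w y)) (q : Polynomial ℝ) :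
    Integrable (fun y => q.eval y ^ 2 * w y) := by
  set r : Polynomial ℝ := q * q with hr
  set N : ℕ := r.natDegree with hN
  have hbound : ∀ y : ℝ, q.eval y ^ 2 * w y
      ≤ ∑ i ∈ Finset.range (N+1), |r.coeff i| * (|y| ^ i * w y) := by
    intro y
    have h1 : q.eval y ^ 2 = r.eval y := by rw [hr, Polynomial.eval_mul, sq]
    have h2 : r.eval y ≤ |r.eval y| := le_abs_self _
    have h3 : |r.eval y| ≤ ∑ i ∈ Finset.range (N+1), |r.coeff i| * |y| ^ i := by
      rw [Polynomial.eval_eq_sum_range' (Nat.lt_succ_self N)]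
      refine (Finset.abs_sum_le_sum_abs _ _).trans ?_
      apply Finset.sum_le_sum
      intro i _
      rw [abs_mul, abs_pow]
    calc q.eval y ^ 2 * w y ≤ |r.eval y| * w y := by
          rw [h1]; exact mul_le_mul_of_nonneg_right h2 (hwnn y)
    _ ≤ (∑ i ∈ Finset.range (N+1), |r.coeff i| * |y| ^ i) * w y :=
          mul_le_mul_of_nonneg_right h3 (hwnn y)
    _ = ∑ i ∈ Finset.range (N+1), |r.coeff i| * (|y| ^ i * w y) := by
          rw [Finset.sum_mul]; exact Finset.sum_congr rfl fun i _ => by ring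
  have hgint : Integrable (fun y => ∑ i ∈ Finset.range (N+1), |r.coeff i| * (|y| ^ i * w y)) :=
    integrable_finset_sum _ (fun i _ => (hmom i).const_mul _)
  refine hgint.mono' ?_ ?_
  · exact ((q.continuous.pow 2).mul hwc).aestronglyMeasurable
  · refine Eventually.of_forall fun y => ?_
    rw [Real.norm_eq_abs, abs_of_nonneg (mul_nonneg (sq_nonneg _) (hwnn y))]
    exact hbound y

lemma exp_ineq_64 : (64:ℝ) * Real.exp 1 ^ 2 ≤ Real.exp 1 ^ 7 := by
  have h27 : (2.7:ℝ) < Real.exp 1 := by linarith [Real.exp_one_gt_d9]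
  have h5 : (2.7:ℝ)^5 ≤ (Real.exp 1)^5 :=
    pow_le_pow_left₀ (by norm_num) h27.le 5
  have h64 : (64:ℝ) ≤ (Real.exp 1)^5 := le_trans (by norm_num) h5
  have he2 : (0:ℝ) < Real.exp 1 ^ 2 := by positivity
  calc (64:ℝ) * Real.exp 1 ^ 2 ≤ (Real.exp 1)^5 * Real.exp 1 ^ 2 :=
        mul_le_mul_of_nonneg_right h64 he2.le
  _ = Real.exp 1 ^ 7 := by ring

lemma log_le_two_sqrt {u : ℝ} (hu : 0 < u) : Real.log u ≤ 2 * Real.sqrt u := by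
  have h1 : Real.log (Real.sqrt u) ≤ Real.sqrt u - 1 :=
    Real.log_le_sub_one_of_pos (Real.sqrt_pos.2 hu)
  have h2 : Real.log u = 2 * Real.log (Real.sqrt u) := by
    rw [Real.log_sqrt hu.le]; ring
  linarith

set_option maxHeartbeats 1000000 in
lemma tail_claim {α β c₆ γ : ℝ} (hα : 0 < α) (hβ : 0 ≤ β) (hc₆ : 0 ≤ c₆)
    (hγ : γ = 4*(10+β+c₆)/α + 64/α^2 + 1) {k : ℕ} (hk : 1 ≤ k) {u : ℝ}
    (hu : γ * k ≤ u) :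
    ((k:ℝ)+1)^3 * u * (64 * Real.exp 1 ^ 2 * u / k)^k * Real.exp (β*k) * Real.exp c₆
      ≤ Real.exp (3/4*α*u) := by
  have hkR : (1:ℝ) ≤ (k:ℝ) := by exact_mod_cast hk
  have hγ1 : (1:ℝ) ≤ γ := by
    have h1 : 0 ≤ 4*(10+β+c₆)/α := by positivity
    have h2 : 0 ≤ 64/α^2 := by positivity
    rw [hγ]; linarith
  have hγpos : (0:ℝ) < γ := by linarith
  have hγk : γ * 1 ≤ γ * k := mul_le_mul_of_nonneg_left hkR hγpos.le
  have hu1 : (1:ℝ) ≤ u := by nlinarith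
  have hupos : (0:ℝ) < u := by linarith
  have hkpos : (0:ℝ) < (k:ℝ) := by linarith
  have hγu : γ ≤ u := by nlinarith
  have hku : (k:ℝ) ≤ u/γ := by
    rw [le_div_iff₀ hγpos, mul_comm]; exact hu
  have hsγpos : 0 < Real.sqrt γ := Real.sqrt_pos.2 hγpos
  have hsγ : (8:ℝ)/α ≤ Real.sqrt γ := by
    have h0 : (8:ℝ)/α = Real.sqrt ((8/α)^2) := (Real.sqrt_sq (by positivity)).symm
    rw [h0]
    apply Real.sqrt_le_sqrt
    have h1 : (8/α)^2 = 64/α^2 := by rw [div_pow]; norm_num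
    have h2 : 0 ≤ 4*(10+β+c₆)/α := by positivity
    rw [h1, hγ]; linarith
  have hsu : Real.sqrt u ≤ u / Real.sqrt γ := by
    rw [le_div_iff₀ hsγpos]
    have h1 : Real.sqrt γ ≤ Real.sqrt u := Real.sqrt_le_sqrt hγu
    calc Real.sqrt u * Real.sqrt γ ≤ Real.sqrt u * Real.sqrt u :=
          mul_le_mul_of_nonneg_left h1 (Real.sqrt_nonneg u)
    _ = u := Real.mul_self_sqrt hupos.le
  have hA : ((k:ℝ)+1)^3 ≤ Real.exp (3*k) := by
    have h1 := Real.add_one_le_exp (k:ℝ)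
    calc ((k:ℝ)+1)^3 ≤ (Real.exp k)^3 := pow_le_pow_left₀ (by positivity) h1 3
    _ = Real.exp (3*k) := by
        rw [← Real.exp_nat_mul]; norm_num
  have hB : u ≤ Real.exp (2*u/Real.sqrt γ) := by
    have h1 : Real.log u ≤ 2*u/Real.sqrt γ := by
      have := log_le_two_sqrt hupos
      have h2 : 2*Real.sqrt u ≤ 2*(u/Real.sqrt γ) := by linarith
      calc Real.log u ≤ 2*Real.sqrt u := this
      _ ≤ 2*u/Real.sqrt γ := by rw [mul_div_assoc]; exact h2
    calc u = Real.exp (Real.log u) := (Real.exp_log hupos).symm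
    _ ≤ Real.exp (2*u/Real.sqrt γ) := Real.exp_le_exp.2 h1
  have hukpos : (0:ℝ) < u/k := by positivity
  have hCy : (u/(k:ℝ))^k ≤ Real.exp (2*u/Real.sqrt γ) := by
    have hlog : Real.log (u/k) ≤ 2*Real.sqrt (u/k) := log_le_two_sqrt hukpos
    have hsqk : (k:ℝ) * Real.sqrt (u/k) ≤ u/Real.sqrt γ := by
      have h1 : Real.sqrt (u/k) ≤ u/(Real.sqrt γ * k) := by
        have h2 : u/(k:ℝ) ≤ (u/(Real.sqrt γ * k))^2 := by
          have h3 : (u/(Real.sqrt γ * k))^2 = u^2/(γ * k^2) := by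
            rw [div_pow, mul_pow, Real.sq_sqrt hγpos.le]
          rw [h3, div_le_div_iff₀ hkpos (by positivity)]
          nlinarith [mul_le_mul_of_nonneg_right hu (mul_pos hupos hkpos).le]
        calc Real.sqrt (u/k) ≤ Real.sqrt ((u/(Real.sqrt γ * k))^2) := Real.sqrt_le_sqrt h2
        _ = u/(Real.sqrt γ * k) := Real.sqrt_sq (by positivity)
      calc (k:ℝ) * Real.sqrt (u/k) ≤ (k:ℝ) * (u/(Real.sqrt γ * k)) :=
            mul_le_mul_of_nonneg_left h1 hkpos.le
      _ = u/Real.sqrt γ := by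
            field_simp
    have h4 : (k:ℝ) * Real.log (u/k) ≤ 2*u/Real.sqrt γ := by
      calc (k:ℝ) * Real.log (u/k) ≤ (k:ℝ) * (2*Real.sqrt (u/k)) :=
            mul_le_mul_of_nonneg_left hlog hkpos.le
      _ = 2*((k:ℝ)*Real.sqrt (u/k)) := by ring
      _ ≤ 2*(u/Real.sqrt γ) := by linarith
      _ = 2*u/Real.sqrt γ := by ring
    calc (u/(k:ℝ))^k = (Real.exp (Real.log (u/k)))^k := by rw [Real.exp_log hukpos]
    _ = Real.exp ((k:ℕ) * Real.log (u/k)) := by rw [← Real.exp_nat_mul]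
    _ ≤ Real.exp (2*u/Real.sqrt γ) := Real.exp_le_exp.2 (by exact_mod_cast h4)
  have hCx : ((64:ℝ) * Real.exp 1 ^ 2)^k ≤ Real.exp (7*k) := by
    calc ((64:ℝ) * Real.exp 1 ^ 2)^k ≤ (Real.exp 1 ^ 7)^k :=
          pow_le_pow_left₀ (by positivity) exp_ineq_64 k
    _ = Real.exp 1 ^ (7*k) := by rw [← pow_mul]
    _ = Real.exp ((7*k : ℕ)) := Real.exp_one_pow _
    _ = Real.exp (7*(k:ℝ)) := congrArg Real.exp (by push_cast; ring)
  have hC : (64 * Real.exp 1 ^ 2 * u / k)^k ≤ Real.exp (7*k + 2*u/Real.sqrt γ) := by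
    have he : 64 * Real.exp 1 ^ 2 * u / (k:ℝ) = (64 * Real.exp 1 ^ 2) * (u/k) := by ring
    rw [he, mul_pow, Real.exp_add]
    exact mul_le_mul hCx hCy (by positivity) (by positivity)
  have hD : Real.exp (β*k) ≤ Real.exp (β*(u/γ)) :=
    Real.exp_le_exp.2 (mul_le_mul_of_nonneg_left hku hβ)
  have hE : Real.exp c₆ ≤ Real.exp (c₆*(u/γ)) := by
    apply Real.exp_le_exp.2
    have h1 : (1:ℝ) ≤ u/γ := le_trans hkR hku
    nlinarith
  have hchain : ((k:ℝ)+1)^3 * u * (64 * Real.exp 1 ^ 2 * u / k)^k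
      * Real.exp (β*k) * Real.exp c₆
      ≤ Real.exp (3*k) * Real.exp (2*u/Real.sqrt γ) * Real.exp (7*k + 2*u/Real.sqrt γ)
        * Real.exp (β*(u/γ)) * Real.exp (c₆*(u/γ)) := by
    gcongr <;> positivity
  refine hchain.trans ?_
  rw [← Real.exp_add, ← Real.exp_add, ← Real.exp_add, ← Real.exp_add]
  apply Real.exp_le_exp.2
  -- 3k + 2u/√γ + (7k + 2u/√γ) + βu/γ + c₆u/γ ≤ 3/4 α u
  have hk10 : (10:ℝ)*k ≤ 10*(u/γ) := by linarith
  have hterm1 : (10+β+c₆)*(u/γ) ≤ α/4*u := by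
    have h1 : 4*(10+β+c₆)/α ≤ γ := by
      have h2 : 0 ≤ 64/α^2 := by positivity
      rw [hγ]; linarith
    have h3 : (10+β+c₆) ≤ α*γ/4 := by
      rw [div_le_iff₀ hα] at h1; linarith
    calc (10+β+c₆)*(u/γ) ≤ (α*γ/4)*(u/γ) := by
          apply mul_le_mul_of_nonneg_right h3 (by positivity)
    _ = α/4*u := by
          field_simp
  have hterm2 : 4*(u/Real.sqrt γ) ≤ α/2*u := by
    have h1 : 4/Real.sqrt γ ≤ α/2 := by
      rw [div_le_div_iff₀ hsγpos (by norm_num)]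
      rw [div_le_iff₀ hα] at hsγ
      linarith
    calc 4*(u/Real.sqrt γ) = (4/Real.sqrt γ)*u := by ring
    _ ≤ (α/2)*u := mul_le_mul_of_nonneg_right h1 hupos.le
    _ = α/2*u := rfl
  have hfin : 3*(k:ℝ) + 2*u/Real.sqrt γ + (7*k + 2*u/Real.sqrt γ) + β*(u/γ) + c₆*(u/γ)
      = 10*(k:ℝ) + 4*(u/Real.sqrt γ) + (β+c₆)*(u/γ) := by ring
  rw [hfin]
  have h5 : (β+c₆)*(u/γ) + 10*(u/γ) = (10+β+c₆)*(u/γ) := by ring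
  nlinarith [hterm1, hterm2, hk10]

set_option maxHeartbeats 1000000 in
theorem mult_by_y_general_weight (C₁ C₂ : ℝ) (hC₁ : 0 < C₁) (hC₂ : 0 < C₂) :
    ∃ C' : ℝ, 0 < C' ∧
      ∀ (V : ℝ → ℝ), Differentiable ℝ V → Differentiable ℝ (deriv V) →
        ∀ w : ℝ → ℝ, w = (fun y => Real.exp (-V y)) →
        (∀ j : ℕ, Integrable (fun y => |y| ^ j * w y)) →
        (∀ y, |deriv V y| ≤ C₁ * (1 + |y|)) →
        (∀ y, C₂ ≤ deriv (deriv V) y) →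
        ∀ k : ℕ, 1 ≤ k → ∀ p : Polynomial ℝ, p.natDegree ≤ k →
          (∫ y, y ^ 2 * p.eval y ^ 2 * w y) ≤
            C' ^ 2 * (k : ℝ) * ∫ y, p.eval y ^ 2 * w y := by
  set α : ℝ := C₂/4 with hα
  set β : ℝ := 2*C₁ with hβ
  have hαpos : 0 < α := by rw [hα]; positivity
  have hβnn : 0 ≤ β := by rw [hβ]; positivity
  set ε : ℝ := Real.sqrt (α/(4*Real.pi)) * Real.exp (-(C₁^2/C₂ + C₁/4)) with hε
  have hεpos : 0 < ε := by
    apply mul_pos _ (Real.exp_pos _)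
    exact Real.sqrt_pos.2 (by positivity)
  set c₆ : ℝ := max 0 (Real.log (1/ε)) with hc₆
  have hc₆nn : 0 ≤ c₆ := le_max_left _ _
  set γ : ℝ := 4*(10+β+c₆)/α + 64/α^2 + 1 with hγ
  have hγ1 : 1 ≤ γ := by
    have h1 : 0 ≤ 4*(10+β+c₆)/α := by positivity
    have h2 : 0 ≤ 64/α^2 := by positivity
    rw [hγ]; linarith
  have hγpos : 0 < γ := by linarith
  refine ⟨Real.sqrt (γ+1), Real.sqrt_pos.2 (by linarith), ?_⟩
  intro V hV hV' w hw hmom hV'b hV'' k hk p hp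
  have hC'sq : Real.sqrt (γ+1)^2 = γ+1 := Real.sq_sqrt (by linarith)
  rw [hC'sq]
  have hkR : (1:ℝ) ≤ (k:ℝ) := by exact_mod_cast hk
  -- basics about w
  have hwpos : ∀ y, 0 < w y := by rw [hw]; intro y; exact Real.exp_pos _
  have hwnn : ∀ y, 0 ≤ w y := fun y => (hwpos y).le
  have hwc : Continuous w := by
    rw [hw]; exact Real.continuous_exp.comp hV.continuous.neg
  have hV'0 : |deriv V 0| ≤ C₁ := by simpa using hV'b 0
  -- sandwich bounds
  have hwub : ∀ y : ℝ, w y ≤ Real.exp (-V 0 + C₁^2/C₂) * Real.exp (-α*y^2) := by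
    intro y
    rw [hw, ← Real.exp_add]
    apply Real.exp_le_exp.2
    have h1 := V_lower hV hV' hV'' y
    have h2 : -(deriv V 0 * y) ≤ C₁ * |y| := by
      calc -(deriv V 0 * y) ≤ |deriv V 0 * y| := neg_le_abs _
      _ = |deriv V 0| * |y| := abs_mul _ _
      _ ≤ C₁ * |y| := mul_le_mul_of_nonneg_right hV'0 (abs_nonneg y)
    have h3 : C₁*|y| ≤ α*y^2 + C₁^2/C₂ := by
      rw [hα]
      have h3' : C₁*|y| - C₂/4*y^2 ≤ C₁^2/C₂ := by
        rw [le_div_iff₀ hC₂]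
        have habs2 : C₂^2*|y|^2 = C₂^2*y^2 := by rw [sq_abs]
        nlinarith [sq_nonneg (C₂*|y| - 2*C₁), habs2]
      linarith
    have h4 : α = C₂/4 := hα
    nlinarith [sq_abs y]
  have hwlb : ∀ y : ℝ, Real.exp (-(V 0) - C₁/4) * Real.exp (-β*y^2) ≤ w y := by
    intro y
    rw [hw, ← Real.exp_add]
    apply Real.exp_le_exp.2
    have h1 := V_upper hV hV'b hC₁ y
    have h2 : β = 2*C₁ := hβ
    nlinarith [sq_abs y, abs_nonneg y, sq_nonneg (|y| - 1/2)]
  -- integrability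
  have hintJ : Integrable (fun y => p.eval y^2 * w y) := integrable_poly_mul_w hwc hwnn hmom p
  have hintI : Integrable (fun y => y^2 * p.eval y^2 * w y) := by
    have h := integrable_poly_mul_w hwc hwnn hmom (Polynomial.X * p)
    refine h.congr (Eventually.of_forall fun y => ?_)
    simp only [Polynomial.eval_mul, Polynomial.eval_X, mul_pow]
  set J : ℝ := ∫ y, p.eval y^2 * w y with hJ
  have hJnn : 0 ≤ J := integral_nonneg fun y => mul_nonneg (sq_nonneg _) (hwnn y)
  -- geometric data
  set a : ℝ := Real.sqrt k with ha
  have hapos : 0 < a := Real.sqrt_pos.2 (by linarith)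
  have ha1 : 1 ≤ a := by
    rw [ha, show (1:ℝ) = Real.sqrt 1 from (Real.sqrt_one).symm]
    exact Real.sqrt_le_sqrt hkR
  have ha2 : a^2 = k := Real.sq_sqrt (by linarith)
  set R : ℝ := Real.sqrt (γ*k) with hR
  have hRnn : 0 ≤ R := Real.sqrt_nonneg _
  have hR2 : R^2 = γ*k := Real.sq_sqrt (by positivity)
  have haR : a ≤ R := by
    rw [ha, hR]
    apply Real.sqrt_le_sqrt
    nlinarith
  set S : Set ℝ := {y : ℝ | R < |y|} with hS
  have hSmeas : MeasurableSet S := (isOpen_lt continuous_const continuous_abs).measurableSet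
  set Q : ℝ := ∫ x in Set.Icc (-a) a, p.eval x^2 with hQ
  have hQnn : 0 ≤ Q := setIntegral_nonneg measurableSet_Icc (fun x _ => sq_nonneg _)
  -- Q ≤ exp(V0+C₁/4) exp(βk) J
  have hQle : Q ≤ Real.exp (V 0 + C₁/4) * Real.exp (β*k) * J := by
    have h1 : ∀ x ∈ Set.Icc (-a) a,
        p.eval x^2 ≤ Real.exp (V 0 + C₁/4) * Real.exp (β*k) * (p.eval x^2 * w x) := by
      intro x hx
      rw [Set.mem_Icc] at hx
      have hx2 : x^2 ≤ (k:ℝ) := by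
        have h3 : |x| ≤ a := abs_le.2 hx
        calc x^2 = |x|^2 := (sq_abs x).symm
        _ ≤ a^2 := by nlinarith [abs_nonneg x]
        _ = k := ha2
      have h2 := hwlb x
      have h4 : Real.exp (-β*(k:ℝ)) ≤ Real.exp (-β*x^2) :=
        Real.exp_le_exp.2 (by nlinarith)
      have h5 : Real.exp (-(V 0) - C₁/4) * Real.exp (-β*(k:ℝ)) ≤ w x :=
        le_trans (mul_le_mul_of_nonneg_left h4 (Real.exp_pos _).le) h2
      have h6 : 1 ≤ Real.exp (V 0 + C₁/4) * Real.exp (β*k) * w x := by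
        have h7 := mul_le_mul_of_nonneg_left h5
          (mul_nonneg (Real.exp_pos (V 0 + C₁/4)).le (Real.exp_pos (β*k)).le)
        calc (1:ℝ) = Real.exp (V 0 + C₁/4) * Real.exp (β*k)
            * (Real.exp (-(V 0) - C₁/4) * Real.exp (-β*(k:ℝ))) := by
              rw [← Real.exp_add, ← Real.exp_add, ← Real.exp_add, ← Real.exp_zero]
              congr 1; ring
        _ ≤ Real.exp (V 0 + C₁/4) * Real.exp (β*k) * w x := h7
      calc p.eval x^2 = p.eval x^2 * 1 := (mul_one _).symm
      _ ≤ p.eval x^2 * (Real.exp (V 0 + C₁/4) * Real.exp (β*k) * w x) :=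
          mul_le_mul_of_nonneg_left h6 (sq_nonneg _)
      _ = Real.exp (V 0 + C₁/4) * Real.exp (β*k) * (p.eval x^2 * w x) := by ring
    have h2 : Q ≤ ∫ x in Set.Icc (-a) a,
        Real.exp (V 0 + C₁/4) * Real.exp (β*k) * (p.eval x^2 * w x) := by
      apply setIntegral_mono_on
      · exact (p.continuous.pow 2).integrableOn_Icc
      · exact (hintJ.const_mul _).integrableOn
      · exact measurableSet_Icc
      · exact h1
    refine h2.trans ?_
    have h3 : ∫ x in Set.Icc (-a) a,
        Real.exp (V 0 + C₁/4) * Real.exp (β*k) * (p.eval x^2 * w x)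
        ≤ ∫ x, Real.exp (V 0 + C₁/4) * Real.exp (β*k) * (p.eval x^2 * w x) := by
      apply setIntegral_le_integral (hintJ.const_mul _)
      exact Eventually.of_forall fun x =>
        mul_nonneg (by positivity) (mul_nonneg (sq_nonneg _) (hwnn x))
    refine h3.trans ?_
    rw [integral_const_mul, ← hJ]
  -- pointwise tail domination
  set EU : ℝ := Real.exp (-V 0 + C₁^2/C₂) with hEU
  have hEUpos : 0 < EU := Real.exp_pos _
  set MQ : ℝ := EU * Q * Real.exp (-β*(k:ℝ)) * Real.exp (-c₆) with hMQ
  have hMQnn : 0 ≤ MQ := by positivity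
  have hdom : ∀ y : ℝ, Set.indicator S (fun y => y^2*p.eval y^2*w y) y
      ≤ MQ * Real.exp (-(α/4)*y^2) := by
    intro y
    by_cases hy : y ∈ S
    · rw [Set.indicator_of_mem hy]
      have hyR : R < |y| := hy
      have hyy : a ≤ |y| := le_trans haR hyR.le
      have hu : γ*k ≤ y^2 := by
        calc γ*(k:ℝ) = R^2 := hR2.symm
        _ ≤ |y|^2 := by nlinarith
        _ = y^2 := sq_abs y
      have hg := poly_growth hk hapos p hp hyy
      have hpow : (8 * Real.exp 1 * |y| / a)^(2*k) = (64 * Real.exp 1^2 * y^2 / k)^k := by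
        rw [pow_mul]
        congr 1
        rw [div_pow, mul_pow, mul_pow, sq_abs, ha2]
        norm_num
      rw [hpow] at hg
      have hg2 : p.eval y^2 ≤ ((k:ℝ)+1)^3 * (64 * Real.exp 1^2 * y^2 / k)^k * Q := by
        refine hg.trans ?_
        have h1 : ((k:ℝ)+1)^3 / a ≤ ((k:ℝ)+1)^3 := div_le_self (by positivity) ha1
        apply mul_le_mul_of_nonneg_right _ hQnn
        exact mul_le_mul_of_nonneg_right h1 (by positivity)
      have htc := tail_claim hαpos hβnn hc₆nn hγ hk hu
      have htc2 : ((k:ℝ)+1)^3 * y^2 * (64 * Real.exp 1^2 * y^2 / k)^k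
          ≤ Real.exp (3/4*α*y^2) * Real.exp (-β*(k:ℝ)) * Real.exp (-c₆) := by
        rw [← Real.exp_add, ← Real.exp_add]
        rw [← sub_nonneg]
        have hee : Real.exp (3/4*α*y^2 + -β*(k:ℝ) + -c₆)
            = Real.exp (3/4*α*y^2) / (Real.exp (β*(k:ℝ)) * Real.exp c₆) := by
          rw [← Real.exp_add, ← Real.exp_sub]
          congr 1; ring
        rw [sub_nonneg, hee, le_div_iff₀ (by positivity)]
        calc ((k:ℝ)+1)^3 * y^2 * (64 * Real.exp 1^2 * y^2 / k)^k
            * (Real.exp (β*(k:ℝ)) * Real.exp c₆)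
            = ((k:ℝ)+1)^3 * y^2 * (64 * Real.exp 1^2 * y^2 / k)^k
              * Real.exp (β*(k:ℝ)) * Real.exp c₆ := by ring
        _ ≤ Real.exp (3/4*α*y^2) := htc
      have hy2nn : (0:ℝ) ≤ y^2 := sq_nonneg y
      have hterm : (0:ℝ) ≤ (64 * Real.exp 1^2 * y^2 / k)^k := by positivity
      calc y^2*p.eval y^2*w y
          ≤ y^2*p.eval y^2*(EU * Real.exp (-α*y^2)) := by
            apply mul_le_mul_of_nonneg_left (hwub y) (by positivity)
      _ = EU * Real.exp (-α*y^2) * y^2 * p.eval y^2 := by ring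
      _ ≤ EU * Real.exp (-α*y^2) * y^2
            * (((k:ℝ)+1)^3 * (64 * Real.exp 1^2 * y^2 / k)^k * Q) := by
            apply mul_le_mul_of_nonneg_left hg2 (by positivity)
      _ = EU * Q * Real.exp (-α*y^2)
            * (((k:ℝ)+1)^3 * y^2 * (64 * Real.exp 1^2 * y^2 / k)^k) := by ring
      _ ≤ EU * Q * Real.exp (-α*y^2)
            * (Real.exp (3/4*α*y^2) * Real.exp (-β*(k:ℝ)) * Real.exp (-c₆)) := by
            apply mul_le_mul_of_nonneg_left htc2 (by positivity)
      _ = MQ * (Real.exp (-α*y^2) * Real.exp (3/4*α*y^2)) := by rw [hMQ]; ring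
      _ = MQ * Real.exp (-(α/4)*y^2) := by
            rw [← Real.exp_add]
            congr 2; ring
    · rw [Set.indicator_of_notMem hy]
      exact mul_nonneg hMQnn (Real.exp_pos _).le
  -- integrate the domination
  have hTint : Integrable (Set.indicator S (fun y => y^2*p.eval y^2*w y)) :=
    hintI.indicator hSmeas
  have hgauss : Integrable (fun y : ℝ => MQ * Real.exp (-(α/4)*y^2)) :=
    (integrable_exp_neg_mul_sq (by positivity)).const_mul MQ
  have hT : ∫ y, Set.indicator S (fun y => y^2*p.eval y^2*w y) y ≤ J := by
    have h1 : ∫ y, Set.indicator S (fun y => y^2*p.eval y^2*w y) y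
        ≤ ∫ y, MQ * Real.exp (-(α/4)*y^2) := integral_mono hTint hgauss hdom
    have h2 : ∫ y : ℝ, MQ * Real.exp (-(α/4)*y^2) = MQ * Real.sqrt (Real.pi/(α/4)) := by
      rw [integral_const_mul, integral_gaussian]
    refine h1.trans ?_
    rw [h2]
    -- MQ * sqrt(4π/α) ≤ J
    have hc6e : Real.exp (-c₆) ≤ ε := by
      rw [Real.exp_neg]
      have h3 : 1/ε ≤ Real.exp c₆ := by
        calc 1/ε = Real.exp (Real.log (1/ε)) := (Real.exp_log (by positivity)).symm
        _ ≤ Real.exp c₆ := Real.exp_le_exp.2 (le_max_right _ _)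
      rw [inv_le_comm₀ (Real.exp_pos _) hεpos]
      calc ε⁻¹ = 1/ε := (one_div ε).symm
      _ ≤ Real.exp c₆ := h3
    have hQle2 : MQ ≤ EU * (Real.exp (V 0 + C₁/4) * Real.exp (β*k) * J)
        * Real.exp (-β*(k:ℝ)) * ε := by
      rw [hMQ]
      have s1 : EU * Q * Real.exp (-β*(k:ℝ)) ≤
          EU * (Real.exp (V 0 + C₁/4) * Real.exp (β*k) * J) * Real.exp (-β*(k:ℝ)) := by
        apply mul_le_mul_of_nonneg_right _ (Real.exp_pos _).le
        exact mul_le_mul_of_nonneg_left hQle hEUpos.le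
      calc EU * Q * Real.exp (-β*(k:ℝ)) * Real.exp (-c₆)
          ≤ EU * Q * Real.exp (-β*(k:ℝ)) * ε := by
            apply mul_le_mul_of_nonneg_left hc6e (by positivity)
      _ ≤ EU * (Real.exp (V 0 + C₁/4) * Real.exp (β*k) * J) * Real.exp (-β*(k:ℝ)) * ε :=
            mul_le_mul_of_nonneg_right s1 hεpos.le
    have hsimp : EU * (Real.exp (V 0 + C₁/4) * Real.exp (β*k) * J)
        * Real.exp (-β*(k:ℝ)) * ε * Real.sqrt (Real.pi/(α/4)) = J := by
      rw [hEU, hε]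
      rw [show Real.pi/(α/4) = 4*Real.pi/α by field_simp]
      have hs : Real.sqrt (α/(4*Real.pi)) * Real.sqrt (4*Real.pi/α) = 1 := by
        rw [← Real.sqrt_mul (by positivity)]
        rw [show α/(4*Real.pi) * (4*Real.pi/α) = 1 by
          field_simp]
        exact Real.sqrt_one
      have he1 : Real.exp (-V 0 + C₁^2/C₂) * Real.exp (V 0 + C₁/4)
          * Real.exp (-(C₁^2/C₂ + C₁/4)) = 1 := by
        rw [← Real.exp_add, ← Real.exp_add, ← Real.exp_zero]
        congr 1; ring
      have he2 : Real.exp (β*(k:ℝ)) * Real.exp (-β*(k:ℝ)) = 1 := by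
        rw [← Real.exp_add, ← Real.exp_zero]; congr 1; ring
      calc Real.exp (-V 0 + C₁^2/C₂) * (Real.exp (V 0 + C₁/4) * Real.exp (β*k) * J)
          * Real.exp (-β*(k:ℝ))
          * (Real.sqrt (α/(4*Real.pi)) * Real.exp (-(C₁^2/C₂ + C₁/4)))
          * Real.sqrt (4*Real.pi/α)
          = (Real.exp (-V 0 + C₁^2/C₂) * Real.exp (V 0 + C₁/4)
              * Real.exp (-(C₁^2/C₂ + C₁/4)))
            * (Real.exp (β*(k:ℝ)) * Real.exp (-β*(k:ℝ)))
            * (Real.sqrt (α/(4*Real.pi)) * Real.sqrt (4*Real.pi/α)) * J := by ring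
      _ = J := by rw [he1, he2, hs]; ring
    calc MQ * Real.sqrt (Real.pi/(α/4))
        ≤ EU * (Real.exp (V 0 + C₁/4) * Real.exp (β*k) * J)
          * Real.exp (-β*(k:ℝ)) * ε * Real.sqrt (Real.pi/(α/4)) :=
          mul_le_mul_of_nonneg_right hQle2 (Real.sqrt_nonneg _)
    _ = J := hsimp
  -- split
  have hsplit : ∀ y : ℝ, y^2*p.eval y^2*w y
      ≤ γ*k*(p.eval y^2*w y) + Set.indicator S (fun y => y^2*p.eval y^2*w y) y := by
    intro y
    by_cases hy : y ∈ S
    · rw [Set.indicator_of_mem hy]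
      have h1 : 0 ≤ γ*k*(p.eval y^2*w y) :=
        mul_nonneg (by positivity) (mul_nonneg (sq_nonneg _) (hwnn y))
      linarith
    · rw [Set.indicator_of_notMem hy]
      have hy2 : y^2 ≤ γ*k := by
        have h1 : |y| ≤ R := not_lt.1 hy
        calc y^2 = |y|^2 := (sq_abs y).symm
        _ ≤ R^2 := by nlinarith [abs_nonneg y]
        _ = γ*k := hR2
      have h2 : y^2*(p.eval y^2*w y) ≤ γ*k*(p.eval y^2*w y) :=
        mul_le_mul_of_nonneg_right hy2 (mul_nonneg (sq_nonneg _) (hwnn y))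
      have h3 : y^2*p.eval y^2*w y = y^2*(p.eval y^2*w y) := by ring
      linarith
  have hIle : ∫ y, y^2*p.eval y^2*w y ≤ γ*k*J
      + ∫ y, Set.indicator S (fun y => y^2*p.eval y^2*w y) y := by
    have h1 : ∫ y, y^2*p.eval y^2*w y
        ≤ ∫ y, (γ*k*(p.eval y^2*w y)
          + Set.indicator S (fun y => y^2*p.eval y^2*w y) y) :=
      integral_mono hintI ((hintJ.const_mul _).add hTint) hsplit
    refine h1.trans ?_
    rw [integral_add (hintJ.const_mul _) hTint, integral_const_mul, ← hJ]
  have hfin : γ*k*J + ∫ y, Set.indicator S (fun y => y^2*p.eval y^2*w y) y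
      ≤ (γ+1)*k*J := by
    have h1 : γ*k*J + ∫ y, Set.indicator S (fun y => y^2*p.eval y^2*w y) y
        ≤ γ*k*J + J := by linarith
    refine h1.trans ?_
    nlinarith
  exact hIle.trans hfin
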